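/- Let X = (X_m)_{m∈ℤ} be a family of continuous functions ℝ → ℝ. For (m,s) ≤ (n,t) define the last-passage value L_{(m,s),(n,t)}(X) = sup { Σ_{r=m}^n X_r(s_{r-1}, s_r) : s = s_{m-1} ≤ s_m ≤ ⋯ ≤ s_n = t }, where X_r(a,b) := X_r(b) - X_r(a). Then for 0 < s < t < T < u and m ≤ n: X_m(s,t) ≤ L_{(m,s),(n,u)}(X) - L_{(m,t),(n,u)}(X) ≤ L_{(m,s),(n,T)}(X) - L_{(m,t),(n,T)}(X). -/

import Mathlib

open Filter Set

/-- A sequence `σ : ℤ → ℝ` encodes an up-right path from `(m,s)` to `(n,t)` via its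
jump times: `σ (m-1) = s`, `σ n = t`, and `σ` is nondecreasing on `[m-1, n]`. -/
def IsPath (m n : ℤ) (s t : ℝ) (σ : ℤ → ℝ) : Prop :=
  σ (m - 1) = s ∧ σ n = t ∧ ∀ r : ℤ, m - 1 ≤ r → r < n → σ r ≤ σ (r + 1)

/-- The energy collected by the path `σ` in the environment `X`:
`Σ_{r=m}^n (X_r(σ_r) - X_r(σ_{r-1}))`. -/
noncomputable def energy (X : ℤ → ℝ → ℝ) (m n : ℤ) (σ : ℤ → ℝ) : ℝ :=
  ∑ r ∈ Finset.Icc m n, (X r (σ r) - X r (σ (r - 1)))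

/-- The semi-discrete last-passage value `L_{(m,s),(n,t)}(X)`. -/
noncomputable def LPP (X : ℤ → ℝ → ℝ) (m : ℤ) (s : ℝ) (n : ℤ) (t : ℝ) : ℝ :=
  sSup (energy X m n '' {σ | IsPath m n s t σ})

private lemma path_mono {m n : ℤ} {s t : ℝ} {σ : ℤ → ℝ} (h : IsPath m n s t σ)
    {a b : ℤ} (ha : m - 1 ≤ a) (hab : a ≤ b) (hb : b ≤ n) : σ a ≤ σ b := by
  exact Int.le_induction (motive := fun c _ => c ≤ n → σ a ≤ σ c)
    (fun _ => le_rfl)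
    (fun c hc ih hcn => le_trans (ih (by omega)) (h.2.2 c (by omega) (by omega)))
    b hab hb

private lemma path_mem {m n : ℤ} {s t : ℝ} {σ : ℤ → ℝ} (h : IsPath m n s t σ)
    {r : ℤ} (h1 : m - 1 ≤ r) (h2 : r ≤ n) : σ r ∈ Set.Icc s t := by
  constructor
  · rw [← h.1]; exact path_mono h le_rfl h1 h2
  · rw [← h.2.1]; exact path_mono h h1 h2 le_rfl

private lemma energy_bdd (X : ℤ → ℝ → ℝ) (hX : ∀ r, Continuous (X r)) (m n : ℤ) {s t : ℝ} :
    BddAbove (energy X m n '' {σ | IsPath m n s t σ}) := by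
  have hb : ∀ r : ℤ, ∃ C : ℝ, ∀ x ∈ Set.Icc s t, |X r x| ≤ C := fun r => by
    obtain ⟨C, hC⟩ := isCompact_Icc.exists_bound_of_continuousOn (hX r).continuousOn
    exact ⟨C, fun x hx => by simpa [Real.norm_eq_abs] using hC x hx⟩
  choose C hC using hb
  refine ⟨∑ r ∈ Finset.Icc m n, 2 * C r, ?_⟩
  rintro y ⟨σ, hσ, rfl⟩
  refine Finset.sum_le_sum fun r hr => ?_
  simp only [Finset.mem_Icc] at hr
  have h1 := abs_le.1 (hC r _ (path_mem hσ (by omega) (by omega : r ≤ n)))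
  have h2 := abs_le.1 (hC r _ (path_mem hσ (by omega : m - 1 ≤ r - 1) (by omega : r - 1 ≤ n)))
  linarith [h1.1, h1.2, h2.1, h2.2]

private lemma exists_path (m n : ℤ) (hmn : m ≤ n) {s t : ℝ} (hst : s ≤ t) :
    ∃ σ, IsPath m n s t σ := by
  refine ⟨fun r => if r < n then s else t, if_pos (by omega), if_neg (by omega), ?_⟩
  intro r h1 h2
  simp only
  rw [if_pos h2]
  split
  · exact le_rfl
  · exact hst

/-- Lemma A.4, first statement: comparison of horizontal increments of last-passage
values in a continuous environment. For `0 < s < t < T < u` and `m ≤ n`,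
`X_m(s,t) ≤ L_{(m,s),(n,u)} - L_{(m,t),(n,u)} ≤ L_{(m,s),(n,T)} - L_{(m,t),(n,T)}`. -/
theorem lpp_horizontal_increment_comparison
    (X : ℤ → ℝ → ℝ) (hX : ∀ r, Continuous (X r))
    (m n : ℤ) (s t T u : ℝ)
    (hs : 0 < s) (hst : s < t) (htT : t < T) (hTu : T < u) (hmn : m ≤ n) :
    X m t - X m s ≤ LPP X m s n u - LPP X m t n u ∧
      LPP X m s n u - LPP X m t n u ≤ LPP X m s n T - LPP X m t n T := by
  classical
  have hsu : s < u := by linarith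
  have htu : t < u := by linarith
  have hsT : s < T := by linarith
  have hne : ∀ (s' t' : ℝ), s' ≤ t' → (energy X m n '' {σ | IsPath m n s' t' σ}).Nonempty := by
    intro s' t' h
    obtain ⟨σ, hσ⟩ := exists_path m n hmn h
    exact ⟨_, σ, hσ, rfl⟩
  constructor
  · -- first inequality
    have key : LPP X m t n u ≤ LPP X m s n u - (X m t - X m s) := by
      apply csSup_le (hne t u htu.le)
      rintro y ⟨σ, hσ, rfl⟩
      rw [le_sub_iff_add_le]
      set σ' : ℤ → ℝ := Function.update σ (m - 1) s with hσ'def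
      have hσ'm : ∀ r : ℤ, r ≠ m - 1 → σ' r = σ r := fun r hr =>
        Function.update_of_ne hr _ _
      have hσm : s ≤ σ m := by
        have := hσ.2.2 (m - 1) le_rfl (by omega)
        rw [hσ.1] at this
        simpa using le_trans hst.le this
      have hpath : IsPath m n s u σ' := by
        refine ⟨Function.update_self _ _ _, ?_, ?_⟩
        · rw [hσ'm n (by omega)]; exact hσ.2.1
        · intro r h1 h2
          rcases eq_or_lt_of_le h1 with h1 | h1
          · rw [← h1, hσ'def, Function.update_self, Function.update_of_ne (by omega)]
            have hm : m - 1 + 1 = m := by omega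
            rw [hm]
            exact hσm
          · rw [hσ'm r (by omega), hσ'm (r + 1) (by omega)]
            exact hσ.2.2 r (by omega) h2
      have hE : energy X m n σ' = energy X m n σ + (X m t - X m s) := by
        unfold energy
        have hterm : ∀ r ∈ Finset.Icc m n,
            X r (σ' r) - X r (σ' (r - 1))
              = (X r (σ r) - X r (σ (r - 1))) + (if r = m then X m t - X m s else 0) := by
          intro r hr
          simp only [Finset.mem_Icc] at hr
          rw [hσ'm r (by omega)]
          by_cases h : r = m
          · subst h
            rw [if_pos rfl, hσ'def, Function.update_self, ← hσ.1]
            ring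
          · rw [hσ'm (r - 1) (by omega), if_neg h, add_zero]
        rw [Finset.sum_congr rfl hterm, Finset.sum_add_distrib,
          Finset.sum_ite_eq' (Finset.Icc m n) m fun _ => X m t - X m s,
          if_pos (Finset.mem_Icc.2 ⟨le_rfl, hmn⟩)]
      calc energy X m n σ + (X m t - X m s) = energy X m n σ' := hE.symm
        _ ≤ LPP X m s n u := le_csSup (energy_bdd X hX m n) ⟨σ', hpath, rfl⟩
    linarith
  · -- second inequality via crossing
    have key : LPP X m s n u + LPP X m t n T ≤ LPP X m s n T + LPP X m t n u := by
      have h1 : LPP X m s n u ≤ (LPP X m s n T + LPP X m t n u) - LPP X m t n T := by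
        apply csSup_le (hne s u hsu.le)
        rintro y ⟨σ, hσ, rfl⟩
        rw [le_sub_iff_add_le, add_comm]
        have h2 : LPP X m t n T ≤ (LPP X m s n T + LPP X m t n u) - energy X m n σ := by
          apply csSup_le (hne t T htT.le)
          rintro y ⟨τ, hτ, rfl⟩
          rw [le_sub_iff_add_le, add_comm]
          -- crossing index
          obtain ⟨k, ⟨hk1, hk2⟩, hkmin⟩ := Int.exists_least_of_bdd
            (P := fun r => m - 1 ≤ r ∧ τ r ≤ σ r)
            ⟨m - 1, fun z hz => hz.1⟩
            ⟨n, by omega, by rw [hσ.2.1, hτ.2.1]; linarith⟩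
          have hkn : k ≤ n := hkmin n ⟨by omega, by rw [hσ.2.1, hτ.2.1]; linarith⟩
          have hkm : m ≤ k := by
            by_contra h
            have hk : k = m - 1 := by omega
            rw [hk, hσ.1, hτ.1] at hk2
            linarith
          have hk3 : σ (k - 1) ≤ τ (k - 1) := by
            by_contra h
            have := hkmin (k - 1) ⟨by omega, le_of_not_ge h⟩
            omega
          set σ₁ : ℤ → ℝ := fun r => if r < k then σ r else τ r with hσ₁def
          set τ₁ : ℤ → ℝ := fun r => if r < k then τ r else σ r with hτ₁def
          have hτmono : τ (k - 1) ≤ τ k := by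
            have := hτ.2.2 (k - 1) (by omega) (by omega)
            simpa using this
          have hpσ₁ : IsPath m n s T σ₁ := by
            refine ⟨?_, ?_, ?_⟩
            · simp only [hσ₁def]
              rw [if_pos (show m - 1 < k by omega)]; exact hσ.1
            · simp only [hσ₁def]
              rw [if_neg (show ¬ n < k by omega)]; exact hτ.2.1
            · intro r h1 h2
              simp only [hσ₁def]
              rcases lt_trichotomy (r + 1) k with h | h | h
              · rw [if_pos (show r < k by omega), if_pos h]; exact hσ.2.2 r h1 h2
              · rw [if_pos (show r < k by omega), if_neg (show ¬ r + 1 < k by omega)]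
                have hsr : σ r ≤ τ r := by
                  have hrk : r = k - 1 := by omega
                  rw [hrk]; exact hk3
                calc σ r ≤ τ r := hsr
                  _ ≤ τ (r + 1) := hτ.2.2 r h1 h2
              · rw [if_neg (show ¬ r < k by omega), if_neg (show ¬ r + 1 < k by omega)]
                exact hτ.2.2 r h1 h2
          have hpτ₁ : IsPath m n t u τ₁ := by
            refine ⟨?_, ?_, ?_⟩
            · simp only [hτ₁def]
              rw [if_pos (show m - 1 < k by omega)]; exact hτ.1
            · simp only [hτ₁def]
              rw [if_neg (show ¬ n < k by omega)]; exact hσ.2.1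
            · intro r h1 h2
              simp only [hτ₁def]
              rcases lt_trichotomy (r + 1) k with h | h | h
              · rw [if_pos (show r < k by omega), if_pos h]; exact hτ.2.2 r h1 h2
              · rw [if_pos (show r < k by omega), if_neg (show ¬ r + 1 < k by omega)]
                have hrk : r = k - 1 := by omega
                have hk1k : k - 1 + 1 = k := by omega
                calc τ r ≤ τ k := by rw [hrk]; exact hτmono
                  _ ≤ σ k := hk2
                  _ = σ (r + 1) := by rw [hrk, hk1k]
              · rw [if_neg (show ¬ r < k by omega), if_neg (show ¬ r + 1 < k by omega)]
                exact hσ.2.2 r h1 h2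
          have hE : energy X m n σ₁ + energy X m n τ₁ = energy X m n σ + energy X m n τ := by
            unfold energy
            rw [← Finset.sum_add_distrib, ← Finset.sum_add_distrib]
            refine Finset.sum_congr rfl fun r hr => ?_
            simp only [hσ₁def, hτ₁def]
            rcases lt_trichotomy r k with h | h | h
            · have h' : r - 1 < k := by omega
              simp only [if_pos h, if_pos h']
            · have h1 : ¬ r < k := by omega
              have h2 : r - 1 < k := by omega
              simp only [if_neg h1, if_pos h2]
              ring
            · have h1 : ¬ r < k := by omega
              have h2 : ¬ r - 1 < k := by omega
              simp only [if_neg h1, if_neg h2]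
              ring
          calc energy X m n σ + energy X m n τ
              = energy X m n σ₁ + energy X m n τ₁ := hE.symm
            _ ≤ LPP X m s n T + LPP X m t n u :=
              add_le_add (le_csSup (energy_bdd X hX m n) ⟨σ₁, hpσ₁, rfl⟩)
                (le_csSup (energy_bdd X hX m n) ⟨τ₁, hpτ₁, rfl⟩)
        linarith
      linarith
    linarith
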